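/- Let E be an n-perfect pseudo-effect algebra with n-decomposition (E₀,...,Eₙ). Then E₀ = Infinit(E) = Rad(E) = Rad_n(E), where Rad(E) is the intersection of all maximal ideals and Rad_n(E) is the intersection of all maximal normal ideals of E. -/

import Mathlib

/-- A pseudo-effect algebra (PEA): a structure with a partial addition `add`
(with domain of definition `D`), a zero and a one, satisfying (PE1)-(PE4)
together with the (derivable) neutrality of zero. -/
structure PEA (E : Type) where
  /-- `D a b` means that the partial sum `a + b` is defined. -/
  D : E → E → Prop
  /-- The partial addition (its value is relevant only when `D a b` holds). -/
  add : E → E → E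
  zero : E
  one : E
  /-- (PE1), definedness part. -/
  assoc_defined : ∀ a b c, (D a b ∧ D (add a b) c) ↔ (D b c ∧ D a (add b c))
  /-- (PE1), equality part. -/
  assoc_eq : ∀ a b c, D a b → D (add a b) c → add (add a b) c = add a (add b c)
  /-- (PE2), right complement. -/
  compl_right : ∀ a, ∃! d, D a d ∧ add a d = one
  /-- (PE2), left complement. -/
  compl_left : ∀ a, ∃! e, D e a ∧ add e a = one
  /-- (PE3). -/
  pe3 : ∀ a b, D a b →
    (∃ d, D d a ∧ add d a = add a b) ∧ (∃ e, D b e ∧ add b e = add a b)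
  /-- (PE4). -/
  pe4_right : ∀ a, D a one → a = zero
  pe4_left : ∀ a, D one a → a = zero
  D_zero_right : ∀ a, D a zero
  D_zero_left : ∀ a, D zero a
  add_zero : ∀ a, add a zero = a
  zero_add : ∀ a, add zero a = a

namespace PEA

variable {E : Type} (P : PEA E)

/-- The induced partial order: `a ≤ b` iff `a + c = b` for some `c`. -/
def le (a b : E) : Prop := ∃ c, P.D a c ∧ P.add a c = b

/-- The left complement `a⁻`, the unique element with `a⁻ + a = 1`. -/
noncomputable def lneg (a : E) : E := (P.compl_left a).choose

/-- The right complement `a~`, the unique element with `a + a~ = 1`. -/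
noncomputable def rneg (a : E) : E := (P.compl_right a).choose

/-- `E` is weakly commutative if `a + b` is defined iff `b + a` is defined. -/
def WeaklyCommutative : Prop := ∀ a b, P.D a b ↔ P.D b a

/-- `E` is symmetric if the two complements coincide. -/
def Symmetric : Prop := ∀ a, P.lneg a = P.rneg a

/-- A state on a PEA: a `[0,1]`-valued map, additive on existing sums, sending
`0 ↦ 0` and `1 ↦ 1`. -/
def IsState (s : E → ℝ) : Prop :=
  s P.zero = 0 ∧ s P.one = 1 ∧ (∀ a, 0 ≤ s a ∧ s a ≤ 1) ∧
    ∀ a b, P.D a b → s (P.add a b) = s a + s b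

/-- An `(n+1)`-valued discrete state: a state whose range is `{0, 1/n, …, 1}`. -/
def IsDiscreteState (n : ℕ) (s : E → ℝ) : Prop :=
  P.IsState s ∧ Set.range s = {x : ℝ | ∃ i ≤ n, x = (i : ℝ) / n}

/-- An ideal: a nonempty downward closed subset closed under existing sums. -/
def IsIdeal (I : Set E) : Prop :=
  I.Nonempty ∧ (∀ a i, i ∈ I → P.le a i → a ∈ I) ∧
    ∀ i j, i ∈ I → j ∈ I → P.D i j → P.add i j ∈ I

/-- A normal ideal: `a + i = j + a` implies `i ∈ I ↔ j ∈ I`. -/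
def IsNormalIdeal (I : Set E) : Prop :=
  P.IsIdeal I ∧ ∀ a i j, P.D a i → P.D j a → P.add a i = P.add j a → (i ∈ I ↔ j ∈ I)

/-- A maximal ideal: proper and not properly contained in a proper ideal. -/
def IsMaximalIdeal (I : Set E) : Prop :=
  P.IsIdeal I ∧ P.one ∉ I ∧ ∀ J, P.IsIdeal J → P.one ∉ J → I ⊆ J → I = J

/-- `n`-fold partial multiple of an element. -/
def nmul : ℕ → E → E
  | 0, _ => P.zero
  | k + 1, a => P.add (nmul k a) a

/-- Definedness of the `n`-fold partial multiple. -/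
def nmulD : ℕ → E → Prop
  | 0, _ => True
  | k + 1, a => nmulD k a ∧ P.D (P.nmul k a) a

/-- The set of elements of infinite isotropic index. -/
def Infinit : Set E := {a | ∀ k, P.nmulD k a}

/-- An `n`-decomposition of a PEA. -/
def IsNDecomp (n : ℕ) (F : ℕ → Set E) : Prop :=
  (∀ i, i ≤ n → (F i).Nonempty) ∧
  (∀ i j, i ≤ n → j ≤ n → i ≠ j → F i ∩ F j = ∅) ∧
  ((⋃ i ∈ Set.Iic n, F i) = Set.univ) ∧
  (∀ i, i ≤ n → P.lneg '' F i = F (n - i) ∧ P.rneg '' F i = F (n - i)) ∧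
  (∀ i j, i ≤ n → j ≤ n → ∀ x ∈ F i, ∀ y ∈ F j, P.D x y →
     i + j ≤ n ∧ P.add x y ∈ F (i + j))

/-- An `n`-perfect PEA: an `n`-decomposition with all sums `Eᵢ + Eⱼ`, `i+j < n`,
existing, and whose bottom slice is the unique maximal ideal. -/
def IsNPerfect (n : ℕ) (F : ℕ → Set E) : Prop :=
  P.IsNDecomp n F ∧
  (∀ i j, i + j < n → ∀ x ∈ F i, ∀ y ∈ F j, P.D x y) ∧
  (P.IsMaximalIdeal (F 0) ∧ ∀ J, P.IsMaximalIdeal J → J = F 0)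

end PEA

/-- in an `n`-perfect PEA, `E₀ = Infinit(E) = Rad(E) = Rad_n(E)`. -/
theorem stmt10 {E : Type} (P : PEA E) (n : ℕ) (hn : 1 ≤ n) (F : ℕ → Set E)
    (hF : P.IsNPerfect n F) :
    F 0 = P.Infinit ∧
    F 0 = ⋂₀ {I : Set E | P.IsMaximalIdeal I} ∧
    F 0 = ⋂₀ {I : Set E | P.IsMaximalIdeal I ∧ P.IsNormalIdeal I} := by
  obtain ⟨⟨hne, hdisj, hcover, hneg, hsum⟩, hall, hmax, huniq⟩ := hF
  obtain ⟨i0, hi0⟩ := hmax.1.1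
  have hzero : P.zero ∈ F 0 :=
    hmax.1.2.1 P.zero i0 hi0 ⟨i0, P.D_zero_left i0, P.zero_add i0⟩
  have hcov : ∀ x : E, ∃ k, k ≤ n ∧ x ∈ F k := by
    intro x
    have hx : x ∈ ⋃ i ∈ Set.Iic n, F i := hcover ▸ Set.mem_univ x
    simpa using hx
  have hdis : ∀ i j, i ≤ n → j ≤ n → i ≠ j → ∀ x, x ∈ F i → x ∈ F j → False := by
    intro i j hi hj hij x hxi hxj
    have h := hdisj i j hi hj hij
    exact absurd (h ▸ Set.mem_inter hxi hxj) (Set.notMem_empty x)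
  have h1 : F 0 = P.Infinit := by
    ext a
    constructor
    · intro ha k
      have key : ∀ m, P.nmulD m a ∧ P.nmul m a ∈ F 0 := by
        intro m
        induction m with
        | zero => exact ⟨trivial, hzero⟩
        | succ m ih =>
          have hD : P.D (P.nmul m a) a := hall 0 0 (by omega) _ ih.2 _ ha
          exact ⟨⟨ih.1, hD⟩, (hsum 0 0 (by omega) (by omega) _ ih.2 _ ha hD).2⟩
      exact (key k).1
    · intro ha
      obtain ⟨k, hk, hak⟩ := hcov a
      by_cases hk0 : k = 0
      · exact hk0 ▸ hak
      · exfalso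
        have key : ∀ m, P.nmul m a ∈ F (m * k) ∧ m * k ≤ n := by
          intro m
          induction m with
          | zero => exact ⟨by simpa [PEA.nmul] using hzero, by omega⟩
          | succ m ih =>
            have hD : P.D (P.nmul m a) a := (ha (m + 1)).2
            have h := hsum (m * k) k ih.2 hk _ ih.1 _ hak hD
            exact ⟨by simpa [Nat.succ_mul, PEA.nmul] using h.2, by simpa [Nat.succ_mul] using h.1⟩
        have h2 : (n + 1) * k ≤ n := (key (n + 1)).2
        have h3 : n + 1 ≤ (n + 1) * k :=
          Nat.le_mul_of_pos_right _ (Nat.pos_of_ne_zero hk0)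
        omega
  have hsetM : {I : Set E | P.IsMaximalIdeal I} = {F 0} := by
    ext I
    simp only [Set.mem_setOf_eq, Set.mem_singleton_iff]
    exact ⟨fun h => huniq I h, fun h => h ▸ hmax⟩
  have hnorm : P.IsNormalIdeal (F 0) := by
    refine ⟨hmax.1, ?_⟩
    intro a i j hai hja heq
    obtain ⟨p, hp, hap⟩ := hcov a
    obtain ⟨q, hq, hiq⟩ := hcov i
    obtain ⟨r, hr, hjr⟩ := hcov j
    have hA := hsum p q hp hq _ hap _ hiq hai
    have hB := hsum r p hr hp _ hjr _ hap hja
    have hpq : p + q = r + p := by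
      by_contra hne'
      exact hdis _ _ hA.1 hB.1 hne' _ hA.2 (heq ▸ hB.2)
    have hqr : q = r := by omega
    subst hqr
    constructor
    · intro hi0'
      have hq0 : q = 0 := by
        by_contra h
        exact hdis 0 q (by omega) hq (Ne.symm h) i hi0' hiq
      exact hq0 ▸ hjr
    · intro hj0'
      have hq0 : q = 0 := by
        by_contra h
        exact hdis 0 q (by omega) hq (Ne.symm h) j hj0' hjr
      exact hq0 ▸ hiq
  have hsetN : {I : Set E | P.IsMaximalIdeal I ∧ P.IsNormalIdeal I} = {F 0} := by
    ext I
    simp only [Set.mem_setOf_eq, Set.mem_singleton_iff]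
    exact ⟨fun h => huniq I h.1, fun h => h ▸ ⟨hmax, hnorm⟩⟩
  refine ⟨h1, ?_, ?_⟩
  · rw [hsetM, Set.sInter_singleton]
  · rw [hsetN, Set.sInter_singleton]
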